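/- (Adequacy) Let s and t be any two states in a finitely branching pLTS. Then s ∼ t if and only if s and t satisfy exactly the same formulae of the logic L, i.e. for every state formula φ of L, s ⊨ φ iff t ⊨ φ. -/

import Mathlib

/-- A finitely supported (discrete) probability distribution over `S`. -/
structure FinDist (S : Type*) where
  w : S →₀ ℝ
  nonneg : ∀ s, 0 ≤ w s
  sum_one : w.sum (fun _ p => p) = 1

/-- The point distribution at `s`. -/
noncomputable def FinDist.point {S : Type*} (s : S) : FinDist S where
  w := Finsupp.single s 1
  nonneg := by
    classical
    intro t
    simp [Finsupp.single_apply]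
    split <;> norm_num
  sum_one := by
    classical
    simp [Finsupp.sum_single_index]

/-- The lifting `R†` of a relation `R ⊆ S × T` to distributions: the smallest
relation relating point distributions of related states and closed under
convex combinations. -/
inductive Lift {S T : Type*} (R : S → T → Prop) : FinDist S → FinDist T → Prop
  | point {s : S} {t : T} :
      R s t → Lift R (FinDist.point s) (FinDist.point t)
  | convex (I : Finset ℕ) (p : ℕ → ℝ)
      (hp : ∀ i ∈ I, 0 ≤ p i) (hsum : ∑ i ∈ I, p i = 1)
      (Δs : ℕ → FinDist S) (Θs : ℕ → FinDist T)
      (h : ∀ i ∈ I, Lift R (Δs i) (Θs i))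
      (Δ : FinDist S) (Θ : FinDist T)
      (hΔ : Δ.w = ∑ i ∈ I, p i • (Δs i).w)
      (hΘ : Θ.w = ∑ i ∈ I, p i • (Θs i).w) :
      Lift R Δ Θ

/-- A probabilistic labelled transition system: a set of states `S`, actions
`Act`, and a transition relation `→ ⊆ S × Act × D(S)`. -/
structure PLTS (S : Type*) (Act : Type*) where
  trans : S → Act → FinDist S → Prop

/-- The approximants `∼ₙ` of probabilistic bisimilarity: `∼₀` is the total
relation, and `s ∼ₙ₊₁ t` iff each transition of one state is matched by a
transition of the other with the resulting distributions related by `(∼ₙ)†`. -/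
def approx {S Act : Type*} (L : PLTS S Act) : ℕ → S → S → Prop
  | 0, _, _ => True
  | n + 1, s, t =>
      (∀ a Δ, L.trans s a Δ → ∃ Θ, L.trans t a Θ ∧ Lift (approx L n) Δ Θ) ∧
      (∀ a Θ, L.trans t a Θ → ∃ Δ, L.trans s a Δ ∧ Lift (approx L n) Δ Θ)

/-- `R` is a probabilistic bisimulation if, whenever `s R t`, each transition
of either state is matched by a transition of the other, with the resulting
distributions related by the lifted relation `R†`. -/
def IsBisimulation {S Act : Type*} (L : PLTS S Act) (R : S → S → Prop) : Prop :=
  ∀ s t, R s t →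
    (∀ a Δ, L.trans s a Δ → ∃ Θ, L.trans t a Θ ∧ Lift R Δ Θ) ∧
    (∀ a Θ, L.trans t a Θ → ∃ Δ, L.trans s a Δ ∧ Lift R Δ Θ)

/-- Probabilistic bisimilarity `∼`: the largest probabilistic bisimulation,
i.e. the union of all probabilistic bisimulations. -/
def Bisim {S Act : Type*} (L : PLTS S Act) (s t : S) : Prop :=
  ∃ R, IsBisimulation L R ∧ R s t

/-- A pLTS is finitely branching if every state has finitely many outgoing
transitions. -/
def FinitelyBranching {S Act : Type*} (L : PLTS S Act) : Prop :=
  ∀ s, { p : Act × FinDist S | L.trans s p.1 p.2 }.Finite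

/-- State formulae of the probabilistic Hennessy–Milner logic `L`:
`φ ::= ⊤ | φ₁ ∧ φ₂ | ⟨a⟩ψ | ¬φ` where the distribution formula
`ψ = ⊕_{i} p i · φ i` (with `p` a finite tuple of probabilities summing to
`1`) is inlined into the diamond modality. -/
inductive SForm (Act : Type*) : Type _
  | top : SForm Act
  | and : SForm Act → SForm Act → SForm Act
  | neg : SForm Act → SForm Act
  | dia (a : Act) (n : ℕ) (p : Fin n → ℝ)
      (hp : ∀ i, 0 ≤ p i) (hsum : ∑ i, p i = 1)
      (φ : Fin n → SForm Act) : SForm Act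

/-- The satisfaction relation `s ⊨ φ`. In the diamond case,
`s ⊨ ⟨a⟩⊕ᵢ p i · φ i` iff `s −a→ Δ` for some `Δ` that decomposes as a convex
combination `Δ = ∑ i, p i • Δs i` with every state in the support of `Δs i`
satisfying `φ i`. -/
def sat {S Act : Type*} (L : PLTS S Act) : S → SForm Act → Prop
  | _, .top => True
  | s, .and φ₁ φ₂ => sat L s φ₁ ∧ sat L s φ₂
  | s, .neg φ => ¬ sat L s φ
  | s, .dia a n p _ _ φ =>
      ∃ Δ : FinDist S, L.trans s a Δ ∧
        ∃ Δs : Fin n → FinDist S,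
          Δ.w = ∑ i, p i • (Δs i).w ∧
          ∀ i, ∀ t ∈ (Δs i).w.support, sat L t (φ i)


section Aux
open Finsupp

variable {S T U Act : Type*}

lemma mass_eq (Δ : FinDist S) : ∑ u ∈ Δ.w.support, Δ.w u = 1 := Δ.sum_one

open Classical in
lemma mapDomain_apply_eq (f : S → T) (c : S →₀ ℝ) (y : T) :
    (Finsupp.mapDomain f c) y = ∑ x ∈ c.support, if f x = y then c x else 0 := by
  classical
  rw [Finsupp.mapDomain, Finsupp.sum_apply, Finsupp.sum]
  exact Finset.sum_congr rfl fun x _ => by rw [Finsupp.single_apply]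

lemma mapDomain_eq_sum_single (f : S → T) (c : S →₀ ℝ) :
    Finsupp.mapDomain f c = ∑ x ∈ c.support, Finsupp.single (f x) (c x) := rfl

lemma point_w (s : S) : (FinDist.point s).w = Finsupp.single s 1 := rfl

lemma point_support (s : S) : (FinDist.point s).w.support = {s} := by
  rw [point_w]; exact Finsupp.support_single_ne_zero s one_ne_zero

lemma sum_single_self (w : S →₀ ℝ) :
    ∑ u ∈ w.support, w u • Finsupp.single u (1 : ℝ) = w := by
  have := Finsupp.sum_single w
  rw [Finsupp.sum] at this
  calc ∑ u ∈ w.support, w u • Finsupp.single u (1 : ℝ)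
      = ∑ u ∈ w.support, Finsupp.single u (w u) := by
        refine Finset.sum_congr rfl fun u _ => by rw [Finsupp.smul_single', mul_one]
    _ = w := this

lemma sum_range_equiv {M : Type*} [AddCommMonoid M] {ι : Type*} (F : Finset ι) (g : ι → M) :
    ∑ k ∈ Finset.range F.card,
      (if h : k < F.card then g ((F.equivFin.symm ⟨k, h⟩ : F) : ι) else 0) = ∑ i ∈ F, g i := by
  rw [← Fin.sum_univ_eq_sum_range]
  calc ∑ k : Fin F.card, (if h : (k : ℕ) < F.card then g ((F.equivFin.symm ⟨k, h⟩ : F) : ι) else 0)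
      = ∑ k : Fin F.card, g ((F.equivFin.symm k : F) : ι) := by
        refine Finset.sum_congr rfl fun k _ => by rw [dif_pos k.isLt]
    _ = ∑ x : F, g (x : ι) := Equiv.sum_comp F.equivFin.symm (fun x : F => g (x : ι))
    _ = ∑ i ∈ F, g i := Finset.sum_coe_sort F g

lemma lift_of_finset {R : S → T → Prop} {ι : Type*} (F : Finset ι)
    (q : ι → ℝ) (hq0 : ∀ i ∈ F, 0 ≤ q i) (hq1 : ∑ i ∈ F, q i = 1)
    (Δc : ι → FinDist S) (Θc : ι → FinDist T)
    (hl : ∀ i ∈ F, Lift R (Δc i) (Θc i))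
    (Δ : FinDist S) (Θ : FinDist T)
    (hΔ : Δ.w = ∑ i ∈ F, q i • (Δc i).w)
    (hΘ : Θ.w = ∑ i ∈ F, q i • (Θc i).w) : Lift R Δ Θ := by
  classical
  refine Lift.convex (Finset.range F.card)
    (fun k => if h : k < F.card then q ((F.equivFin.symm ⟨k, h⟩ : F) : ι) else 0) ?_ ?_
    (fun k => if h : k < F.card then Δc ((F.equivFin.symm ⟨k, h⟩ : F) : ι) else Δ)
    (fun k => if h : k < F.card then Θc ((F.equivFin.symm ⟨k, h⟩ : F) : ι) else Θ) ?_ Δ Θ ?_ ?_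
  · intro k hk
    rw [Finset.mem_range] at hk
    simpa only [dif_pos hk] using hq0 _ (F.equivFin.symm ⟨k, hk⟩).2
  · exact (sum_range_equiv F q).trans hq1
  · intro k hk
    rw [Finset.mem_range] at hk
    simp only [dif_pos hk]
    exact hl _ (F.equivFin.symm ⟨k, hk⟩).2
  · rw [hΔ, ← sum_range_equiv F (fun i => q i • (Δc i).w)]
    refine Finset.sum_congr rfl fun k hk => ?_
    rw [Finset.mem_range] at hk
    simp only [dif_pos hk]
  · rw [hΘ, ← sum_range_equiv F (fun i => q i • (Θc i).w)]
    refine Finset.sum_congr rfl fun k hk => ?_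
    rw [Finset.mem_range] at hk
    simp only [dif_pos hk]

lemma lift_point_left {R : S → T → Prop} (u : S) (θ : FinDist T)
    (h : ∀ v ∈ θ.w.support, R u v) : Lift R (FinDist.point u) θ := by
  refine lift_of_finset θ.w.support (fun v => θ.w v) (fun v _ => θ.nonneg v) (mass_eq θ)
    (fun _ => FinDist.point u) (fun v => FinDist.point v)
    (fun v hv => Lift.point (h v hv)) _ _ ?_ ?_
  · rw [point_w, ← Finset.sum_smul, mass_eq, one_smul]
  · calc θ.w = ∑ v ∈ θ.w.support, θ.w v • Finsupp.single v (1:ℝ) := (sum_single_self θ.w).symm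
      _ = ∑ v ∈ θ.w.support, θ.w v • (FinDist.point v).w := rfl

lemma lift_mono {R R' : S → T → Prop} (hRR : ∀ a b, R a b → R' a b)
    {Δ : FinDist S} {Θ : FinDist T} (h : Lift R Δ Θ) : Lift R' Δ Θ := by
  induction h with
  | point hst => exact Lift.point (hRR _ _ hst)
  | convex I p hp hsum Δs Θs h Δ Θ hΔ hΘ ih => exact Lift.convex I p hp hsum Δs Θs ih Δ Θ hΔ hΘ

lemma lift_flip {R : S → T → Prop} {Δ : FinDist S} {Θ : FinDist T} (h : Lift R Δ Θ) :
    Lift (fun b a => R a b) Θ Δ := by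
  induction h with
  | point hst => exact Lift.point hst
  | convex I p hp hsum Δs Θs h Δ Θ hΔ hΘ ih => exact Lift.convex I p hp hsum Θs Δs ih Θ Δ hΘ hΔ

end Aux

section Aux2
open Finsupp

variable {S T Act : Type*}

lemma lift_coupling {R : S → T → Prop} {Δ : FinDist S} {Θ : FinDist T} (h : Lift R Δ Θ) :
    ∃ c : (S × T) →₀ ℝ, (∀ x, 0 ≤ c x) ∧ (∀ x ∈ c.support, R x.1 x.2) ∧
      Finsupp.mapDomain Prod.fst c = Δ.w ∧ Finsupp.mapDomain Prod.snd c = Θ.w := by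
  classical
  induction h with
  | @point s t hst =>
    refine ⟨Finsupp.single (s, t) 1, ?_, ?_, ?_, ?_⟩
    · intro x
      rw [Finsupp.single_apply]
      split <;> norm_num
    · intro x hx
      rw [Finsupp.support_single_ne_zero _ one_ne_zero, Finset.mem_singleton] at hx
      subst hx; exact hst
    · rw [Finsupp.mapDomain_single]; rfl
    · rw [Finsupp.mapDomain_single]; rfl
  | convex I p hp hsum Δs Θs h Δ Θ hΔ hΘ ih =>
    choose! c hc0 hcR hcf hcs using ih
    refine ⟨∑ i ∈ I, p i • c i, ?_, ?_, ?_, ?_⟩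
    · intro x
      rw [Finsupp.finset_sum_apply]
      refine Finset.sum_nonneg fun i hi => ?_
      rw [Finsupp.smul_apply, smul_eq_mul]
      exact mul_nonneg (hp i hi) (hc0 i hi x)
    · intro x hx
      obtain ⟨i, hi, hxi⟩ := Finset.mem_biUnion.1 (Finsupp.support_finset_sum hx)
      exact hcR i hi x (Finsupp.support_smul hxi)
    · rw [Finsupp.mapDomain_finset_sum, hΔ]
      exact Finset.sum_congr rfl fun i hi => by rw [Finsupp.mapDomain_smul, hcf i hi]
    · rw [Finsupp.mapDomain_finset_sum, hΘ]
      exact Finset.sum_congr rfl fun i hi => by rw [Finsupp.mapDomain_smul, hcs i hi]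

lemma transfer {Act : Type*} (L : PLTS S Act) {R : S → S → Prop} {Δ Θ : FinDist S}
    (c : (S × S) →₀ ℝ) (hc0 : ∀ x, 0 ≤ c x) (hcR : ∀ x ∈ c.support, R x.1 x.2)
    (hfst : Finsupp.mapDomain Prod.fst c = Δ.w) (hsnd : Finsupp.mapDomain Prod.snd c = Θ.w)
    {n : ℕ} (p : Fin n → ℝ) (hp : ∀ i, 0 ≤ p i) (Δs : Fin n → FinDist S)
    (hdec : Δ.w = ∑ i, p i • (Δs i).w)
    (φ : Fin n → SForm Act)
    (hsat : ∀ i, ∀ u ∈ (Δs i).w.support, sat L u (φ i))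
    (hR : ∀ u v, R u v → ∀ i, sat L u (φ i) → sat L v (φ i)) :
    ∃ Θs : Fin n → FinDist S, Θ.w = ∑ i, p i • (Θs i).w ∧
      ∀ i, ∀ v ∈ (Θs i).w.support, sat L v (φ i) := by
  classical
  -- pointwise decomposition
  have hΔpt : ∀ u, Δ.w u = ∑ i, p i * (Δs i).w u := by
    intro u
    rw [hdec, Finsupp.finset_sum_apply]
    exact Finset.sum_congr rfl fun i _ => by rw [Finsupp.smul_apply, smul_eq_mul]
  have hΔs_le : ∀ i u, p i * (Δs i).w u ≤ Δ.w u := by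
    intro i u
    rw [hΔpt]
    exact Finset.single_le_sum (fun j _ => mul_nonneg (hp j) ((Δs j).nonneg u))
      (Finset.mem_univ i)
  -- marginal at u as a filtered sum
  have hmarg : ∀ u, Δ.w u = ∑ x ∈ c.support, if x.1 = u then c x else 0 := by
    intro u; rw [← hfst, mapDomain_apply_eq]
  have hcle : ∀ x, c x ≤ Δ.w x.1 := by
    intro x
    by_cases hx : x ∈ c.support
    · rw [hmarg x.1]
      have := Finset.single_le_sum
        (f := fun y : S × S => if y.1 = x.1 then c y else 0)
        (fun y _ => by split <;> [exact hc0 y; exact le_refl 0]) hx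
      simpa using this
    · rw [Finsupp.notMem_support_iff] at hx
      rw [hx]
      exact Δ.nonneg x.1
  -- the candidate components
  set g : Fin n → (S →₀ ℝ) :=
    fun i => ∑ x ∈ c.support, ((Δs i).w x.1 / Δ.w x.1) • Finsupp.single x.2 (c x) with hg
  have hgpt : ∀ i v, g i v =
      ∑ x ∈ c.support, ((Δs i).w x.1 / Δ.w x.1) * (if x.2 = v then c x else 0) := by
    intro i v
    rw [hg]
    rw [Finsupp.finset_sum_apply]
    exact Finset.sum_congr rfl fun x _ => by
      rw [Finsupp.smul_apply, smul_eq_mul, Finsupp.single_apply]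
  have hg0 : ∀ i v, 0 ≤ g i v := by
    intro i v
    rw [hgpt]
    refine Finset.sum_nonneg fun x _ => mul_nonneg
      (div_nonneg ((Δs i).nonneg _) (Δ.nonneg _)) ?_
    split <;> [exact hc0 x; exact le_refl 0]
  -- mass of g i is 1 when p i ≠ 0
  have hsupp_sub : ∀ i, p i ≠ 0 → (Δs i).w.support ⊆ c.support.image Prod.fst := by
    intro i hpi u hu
    have hpos : 0 < p i * (Δs i).w u := by
      rcases (hp i).lt_or_eq with h | h
      · rcases ((Δs i).nonneg u).lt_or_eq with h2 | h2
        · exact mul_pos h h2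
        · exact absurd h2.symm (Finsupp.mem_support_iff.1 hu)
      · exact absurd h.symm hpi
    have hΔu : 0 < Δ.w u := lt_of_lt_of_le hpos (hΔs_le i u)
    have : u ∈ Δ.w.support := Finsupp.mem_support_iff.2 (ne_of_gt hΔu)
    rw [← hfst] at this
    exact Finsupp.mapDomain_support this
  have hΔzero : ∀ i, p i ≠ 0 → ∀ u, Δ.w u = 0 → (Δs i).w u = 0 := by
    intro i hpi u hu
    by_contra h
    have hpos : 0 < p i * (Δs i).w u := by
      rcases (hp i).lt_or_eq with h1 | h1
      · rcases ((Δs i).nonneg u).lt_or_eq with h2 | h2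
        · exact mul_pos h1 h2
        · exact absurd h2.symm h
      · exact absurd h1.symm hpi
    have := lt_of_lt_of_le hpos (hΔs_le i u)
    rw [hu] at this
    exact absurd this (lt_irrefl 0)
  have hmass : ∀ i, p i ≠ 0 → (g i).sum (fun _ q => q) = 1 := by
    intro i hpi
    have h1 : (g i).sum (fun _ q => q) =
        ∑ x ∈ c.support, ((Δs i).w x.1 / Δ.w x.1) * c x := by
      rw [hg, ← Finsupp.sum_finset_sum_index (fun _ => rfl) (fun _ _ _ => rfl)]
      refine Finset.sum_congr rfl fun x _ => ?_
      rw [Finsupp.smul_single', Finsupp.sum_single_index rfl]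
    rw [h1]
    have h2 : ∑ x ∈ c.support, ((Δs i).w x.1 / Δ.w x.1) * c x =
        ∑ u ∈ c.support.image Prod.fst,
          ∑ x ∈ c.support.filter (fun x => x.1 = u), ((Δs i).w x.1 / Δ.w x.1) * c x :=
      (Finset.sum_fiberwise_of_maps_to (fun x hx => Finset.mem_image_of_mem _ hx) _).symm
    rw [h2]
    have h3 : ∀ u ∈ c.support.image Prod.fst,
        ∑ x ∈ c.support.filter (fun x => x.1 = u), ((Δs i).w x.1 / Δ.w x.1) * c x
          = (Δs i).w u := by
      intro u _
      have hsum_u : ∑ x ∈ c.support.filter (fun x => x.1 = u), c x = Δ.w u := by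
        rw [Finset.sum_filter, ← hmarg u]
      by_cases hΔu : Δ.w u = 0
      · rw [hΔzero i hpi u hΔu]
        refine Finset.sum_eq_zero fun x hx => ?_
        have hx1 := (Finset.mem_filter.1 hx).2
        rw [hx1, hΔu, div_zero, zero_mul]
      · calc ∑ x ∈ c.support.filter (fun x => x.1 = u), ((Δs i).w x.1 / Δ.w x.1) * c x
            = ∑ x ∈ c.support.filter (fun x => x.1 = u), ((Δs i).w u / Δ.w u) * c x := by
              refine Finset.sum_congr rfl fun x hx => ?_
              rw [(Finset.mem_filter.1 hx).2]
          _ = ((Δs i).w u / Δ.w u) * ∑ x ∈ c.support.filter (fun x => x.1 = u), c x := by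
              rw [Finset.mul_sum]
          _ = (Δs i).w u := by rw [hsum_u, div_mul_cancel₀ _ hΔu]
    rw [Finset.sum_congr rfl h3]
    rw [← Finset.sum_subset (hsupp_sub i hpi)
      (fun u _ hu => Finsupp.notMem_support_iff.1 hu)]
    exact mass_eq (Δs i)
  set Θc : Fin n → FinDist S := fun i =>
    if hpi : p i = 0 then Δs i else ⟨g i, hg0 i, hmass i hpi⟩ with hΘc
  refine ⟨Θc, ?_, ?_⟩
  · -- Θ.w = ∑ i, p i • (Θc i).w
    have hstep : ∑ i, p i • (Θc i).w = ∑ i, p i • g i := by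
      refine Finset.sum_congr rfl fun i _ => ?_
      rw [hΘc]
      by_cases hpi : p i = 0
      · rw [hpi, zero_smul, zero_smul]
      · simp only [dif_neg hpi]
    rw [hstep]
    have hswap : ∑ i, p i • g i = ∑ i : Fin n, ∑ x ∈ c.support,
        (p i * ((Δs i).w x.1 / Δ.w x.1)) • Finsupp.single x.2 (c x) := by
      refine Finset.sum_congr rfl fun i _ => ?_
      show p i • (∑ x ∈ c.support, ((Δs i).w x.1 / Δ.w x.1) • Finsupp.single x.2 (c x)) = _
      rw [Finset.smul_sum]
      exact Finset.sum_congr rfl fun x _ => by rw [smul_smul]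
    rw [hswap, Finset.sum_comm]
    have hcollect : ∀ x ∈ c.support, ∑ i : Fin n,
        (p i * ((Δs i).w x.1 / Δ.w x.1)) • Finsupp.single x.2 (c x)
        = (∑ i, p i * ((Δs i).w x.1 / Δ.w x.1)) • Finsupp.single x.2 (c x) :=
      fun x _ => (Finset.sum_smul).symm
    rw [Finset.sum_congr rfl hcollect]
    have hcoef : ∀ x ∈ c.support, (∑ i, p i * ((Δs i).w x.1 / Δ.w x.1)) = 1 := by
      intro x hx
      have hcpos : 0 < c x :=
        lt_of_le_of_ne (hc0 x) (Ne.symm (Finsupp.mem_support_iff.1 hx))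
      have hΔpos : 0 < Δ.w x.1 := lt_of_lt_of_le hcpos (hcle x)
      have : ∑ i, p i * ((Δs i).w x.1 / Δ.w x.1) = (∑ i, p i * (Δs i).w x.1) / Δ.w x.1 := by
        rw [Finset.sum_div]
        exact Finset.sum_congr rfl fun i _ => by rw [mul_div_assoc]
      rw [this, ← hΔpt, div_self (ne_of_gt hΔpos)]
    calc Θ.w = Finsupp.mapDomain Prod.snd c := hsnd.symm
      _ = ∑ x ∈ c.support, Finsupp.single x.2 (c x) := mapDomain_eq_sum_single _ _
      _ = ∑ x ∈ c.support, (∑ i, p i * ((Δs i).w x.1 / Δ.w x.1)) • Finsupp.single x.2 (c x) := by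
          refine Finset.sum_congr rfl fun x hx => ?_
          rw [hcoef x hx, one_smul]
  · -- support satisfaction
    intro i v hv
    rw [hΘc] at hv
    by_cases hpi : p i = 0
    · simp only [dif_pos hpi] at hv
      exact hsat i v hv
    · simp only [dif_neg hpi] at hv
      have hgv : g i v ≠ 0 := Finsupp.mem_support_iff.1 hv
      rw [hgpt] at hgv
      obtain ⟨x, hx, hterm⟩ := Finset.exists_ne_zero_of_sum_ne_zero hgv
      have hx2 : x.2 = v := by
        by_contra h
        rw [if_neg h, mul_zero] at hterm
        exact hterm rfl
      have hΔsx : (Δs i).w x.1 ≠ 0 := by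
        intro h
        rw [h, zero_div, zero_mul] at hterm
        exact hterm rfl
      have hu : x.1 ∈ (Δs i).w.support := Finsupp.mem_support_iff.2 hΔsx
      have := hR x.1 x.2 (hcR x hx) i (hsat i x.1 hu)
      rwa [hx2] at this

end Aux2

section Aux3

variable {S Act : Type*}

lemma bisim_isBisimulation (L : PLTS S Act) : IsBisimulation L (Bisim L) := by
  rintro s t ⟨R, hR, hst⟩
  constructor
  · intro a Δ h
    obtain ⟨Θ, hΘ, hl⟩ := (hR s t hst).1 a Δ h
    exact ⟨Θ, hΘ, lift_mono (fun a b hab => ⟨R, hR, hab⟩) hl⟩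
  · intro a Θ h
    obtain ⟨Δ, hΔ, hl⟩ := (hR s t hst).2 a Θ h
    exact ⟨Δ, hΔ, lift_mono (fun a b hab => ⟨R, hR, hab⟩) hl⟩

lemma bisim_symm {L : PLTS S Act} {s t : S} (h : Bisim L s t) : Bisim L t s := by
  obtain ⟨R, hR, hst⟩ := h
  refine ⟨fun a b => R b a, ?_, hst⟩
  intro u v huv
  constructor
  · intro a Δ h
    obtain ⟨Θ, hΘ, hl⟩ := (hR v u huv).2 a Δ h
    exact ⟨Θ, hΘ, lift_flip hl⟩
  · intro a Θ h
    obtain ⟨Δ, hΔ, hl⟩ := (hR v u huv).1 a Θ h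
    exact ⟨Δ, hΔ, lift_flip hl⟩

lemma sat_iff_of_bisim {L : PLTS S Act} (φ : SForm Act) :
    ∀ s t : S, Bisim L s t → (sat L s φ ↔ sat L t φ) := by
  induction φ with
  | top => intro s t _; simp [sat]
  | and φ₁ φ₂ ih₁ ih₂ =>
    intro s t hb
    simp only [sat]
    rw [ih₁ s t hb, ih₂ s t hb]
  | neg φ ih =>
    intro s t hb
    simp only [sat]
    rw [ih s t hb]
  | dia a n p hp hsum φ ih =>
    have key : ∀ s t : S, Bisim L s t →
        sat L s (SForm.dia a n p hp hsum φ) → sat L t (SForm.dia a n p hp hsum φ) := by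
      intro s t hb hs
      obtain ⟨Δ, htr, Δs, hdec, hsat⟩ := hs
      obtain ⟨Θ, htrΘ, hlift⟩ := (bisim_isBisimulation L s t hb).1 a Δ htr
      obtain ⟨c, hc0, hcR, hcf, hcs⟩ := lift_coupling hlift
      obtain ⟨Θs, hΘdec, hΘsat⟩ := transfer L c hc0 hcR hcf hcs p hp Δs hdec φ hsat
        (fun u v huv i hu => (ih i u v huv).1 hu)
      exact ⟨Θ, htrΘ, Θs, hΘdec, hΘsat⟩
    intro s t hb
    exact ⟨key s t hb, key t s (bisim_symm hb)⟩

end Aux3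

section Aux4

variable {S Act : Type*}

/-- Finite conjunction of formulae. -/
def conjF : List (SForm Act) → SForm Act
  | [] => .top
  | φ :: l => .and φ (conjF l)

lemma sat_conjF (L : PLTS S Act) (s : S) (l : List (SForm Act)) :
    sat L s (conjF l) ↔ ∀ φ ∈ l, sat L s φ := by
  induction l with
  | nil => simp [conjF, sat]
  | cons φ l ih => simp [conjF, sat, ih]

/-- Two states satisfying the same formulae. -/
def SameSat (L : PLTS S Act) (s t : S) : Prop := ∀ φ : SForm Act, sat L s φ ↔ sat L t φ

lemma sameSat_symm {L : PLTS S Act} {s t : S} (h : SameSat L s t) : SameSat L t s :=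
  fun φ => (h φ).symm

lemma exists_distinguishing {L : PLTS S Act} {u v : S} (h : ¬ SameSat L u v) :
    ∃ φ, sat L u φ ∧ ¬ sat L v φ := by
  rw [SameSat, not_forall] at h
  obtain ⟨φ, hφ⟩ := h
  by_cases hu : sat L u φ
  · exact ⟨φ, hu, fun hv => hφ ⟨fun _ => hv, fun _ => hu⟩⟩
  · have hv : sat L v φ := by
      by_contra hv
      exact hφ ⟨fun h => absurd h hu, fun h => absurd h hv⟩
    exact ⟨.neg φ, hu, fun h => h hv⟩

lemma sameSat_step {L : PLTS S Act} (hfb : FinitelyBranching L) (s t : S)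
    (h : SameSat L s t) (a : Act) (Δ : FinDist S) (htr : L.trans s a Δ) :
    ∃ Θ, L.trans t a Θ ∧ Lift (SameSat L) Δ Θ := by
  classical
  -- distinguishing formulae
  set D : S → S → SForm Act := fun u v =>
    if h : ¬ SameSat L u v then (exists_distinguishing h).choose else .top with hD
  have hD1 : ∀ u v, ¬ SameSat L u v → sat L u (D u v) ∧ ¬ sat L v (D u v) := by
    intro u v huv
    rw [hD]
    simp only [dif_pos huv]
    exact (exists_distinguishing huv).choose_spec
  -- the finite set of relevant states
  set G : Finset S :=
    Δ.w.support ∪ (hfb t).toFinset.biUnion (fun x => x.2.w.support) with hG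
  -- characteristic formulae relative to G
  set X : S → SForm Act := fun u =>
    conjF ((G.filter (fun v => ¬ SameSat L u v)).toList.map (D u)) with hX
  have hXself : ∀ u, sat L u (X u) := by
    intro u
    rw [hX]
    rw [sat_conjF]
    intro φ hφ
    obtain ⟨v, hv, rfl⟩ := List.mem_map.1 hφ
    have := (Finset.mem_filter.1 (Finset.mem_toList.1 hv)).2
    exact (hD1 u v this).1
  have hXsound : ∀ u v, v ∈ G → sat L v (X u) → SameSat L u v := by
    intro u v hvG hsatv
    by_contra hnr
    rw [hX, sat_conjF] at hsatv
    have hmem : D u v ∈ (G.filter (fun v => ¬ SameSat L u v)).toList.map (D u) :=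
      List.mem_map.2 ⟨v, Finset.mem_toList.2 (Finset.mem_filter.2 ⟨hvG, hnr⟩), rfl⟩
    exact (hD1 u v hnr).2 (hsatv _ hmem)
  -- enumerate the support of Δ
  set n := Δ.w.support.card with hn
  set e : Fin n → S := fun i => ((Δ.w.support.equivFin.symm i : Δ.w.support) : S) with he
  have heMem : ∀ i, e i ∈ Δ.w.support := fun i => (Δ.w.support.equivFin.symm i).2
  set p : Fin n → ℝ := fun i => Δ.w (e i) with hpdef
  have hp : ∀ i, 0 ≤ p i := fun i => Δ.nonneg (e i)
  have hsum : ∑ i, p i = 1 := by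
    rw [hpdef]
    calc ∑ i : Fin n, Δ.w (e i)
        = ∑ x : Δ.w.support, Δ.w (x : S) :=
          Equiv.sum_comp Δ.w.support.equivFin.symm (fun x : Δ.w.support => Δ.w (x : S))
      _ = ∑ u ∈ Δ.w.support, Δ.w u := Finset.sum_coe_sort _ _
      _ = 1 := mass_eq Δ
  have hdecΔ : Δ.w = ∑ i, p i • (FinDist.point (e i)).w := by
    calc Δ.w = ∑ u ∈ Δ.w.support, Δ.w u • Finsupp.single u (1:ℝ) := (sum_single_self Δ.w).symm
      _ = ∑ x : Δ.w.support, Δ.w (x : S) • Finsupp.single (x : S) (1:ℝ) :=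
          (Finset.sum_coe_sort _ _).symm
      _ = ∑ i : Fin n, Δ.w (e i) • Finsupp.single (e i) (1:ℝ) :=
          (Equiv.sum_comp Δ.w.support.equivFin.symm
            (fun x : Δ.w.support => Δ.w (x : S) • Finsupp.single (x : S) (1:ℝ))).symm
      _ = ∑ i, p i • (FinDist.point (e i)).w := rfl
  -- s satisfies the diamond formula
  have hsψ : sat L s (SForm.dia a n p hp hsum (fun i => X (e i))) := by
    refine ⟨Δ, htr, fun i => FinDist.point (e i), hdecΔ, ?_⟩
    intro i u hu
    rw [point_support, Finset.mem_singleton] at hu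
    subst hu
    exact hXself (e i)
  have htψ := (h (SForm.dia a n p hp hsum (fun i => X (e i)))).1 hsψ
  obtain ⟨Θ, htrΘ, Θs, hΘdec, hΘsat⟩ := htψ
  -- support of Θ is inside G
  have hsuppΘ : Θ.w.support ⊆ G := by
    intro v hv
    rw [hG]
    refine Finset.mem_union_right _ (Finset.mem_biUnion.2 ⟨(a, Θ), ?_, hv⟩)
    exact (hfb t).mem_toFinset.2 htrΘ
  -- relatedness of components
  have hRel : ∀ i, ∀ v ∈ (Θs i).w.support, SameSat L (e i) v := by
    intro i v hv
    have hpi : 0 < p i :=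
      lt_of_le_of_ne (hp i) (Ne.symm (Finsupp.mem_support_iff.1 (heMem i)))
    have hΘv : 0 < Θ.w v := by
      have hpt : Θ.w v = ∑ j, p j * (Θs j).w v := by
        rw [hΘdec, Finsupp.finset_sum_apply]
        exact Finset.sum_congr rfl fun j _ => by rw [Finsupp.smul_apply, smul_eq_mul]
      have hterm : 0 < p i * (Θs i).w v :=
        mul_pos hpi (lt_of_le_of_ne ((Θs i).nonneg v)
          (Ne.symm (Finsupp.mem_support_iff.1 hv)))
      have hle : p i * (Θs i).w v ≤ Θ.w v := by
        rw [hpt]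
        exact Finset.single_le_sum
          (fun j _ => mul_nonneg (hp j) ((Θs j).nonneg v)) (Finset.mem_univ i)
      exact lt_of_lt_of_le hterm hle
    have hvG : v ∈ G := hsuppΘ (Finsupp.mem_support_iff.2 (ne_of_gt hΘv))
    exact hXsound (e i) v hvG (hΘsat i v hv)
  -- conclude with the lifting
  refine ⟨Θ, htrΘ, ?_⟩
  refine lift_of_finset (Finset.univ : Finset (Fin n)) p (fun i _ => hp i)
    hsum (fun i => FinDist.point (e i)) Θs
    (fun i _ => lift_point_left (e i) (Θs i) (hRel i)) Δ Θ hdecΔ hΘdec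

lemma sameSat_isBisimulation {L : PLTS S Act} (hfb : FinitelyBranching L) :
    IsBisimulation L (SameSat L) := by
  intro s t h
  constructor
  · intro a Δ htr
    exact sameSat_step hfb s t h a Δ htr
  · intro a Θ htr
    obtain ⟨Δ, htrΔ, hl⟩ := sameSat_step hfb t s (sameSat_symm h) a Θ htr
    exact ⟨Δ, htrΔ, lift_mono (fun a b hab => sameSat_symm hab) (lift_flip hl)⟩

end Aux4

/-- Adequacy: in a finitely branching pLTS, two states are probabilistically
bisimilar iff they satisfy exactly the same formulae of the logic `L`. -/
theorem bisim_iff_same_formulas {S Act : Type*} (L : PLTS S Act)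
    (hfb : FinitelyBranching L) (s t : S) :
    Bisim L s t ↔ ∀ φ : SForm Act, (sat L s φ ↔ sat L t φ) := by
  constructor
  · intro hb φ
    exact sat_iff_of_bisim φ s t hb
  · intro h
    exact ⟨SameSat L, sameSat_isBisimulation hfb, h⟩
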